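/- Let G be a labelled unit interval graph on D vertices and let i < D be a vertex of G such that m_i + 1 ≤ m_{i+1}, and suppose that for some k ≥ 1 with m_i + k ≤ D the pairs (w_{m_i+1}, m_{m_i+1}) = (w_{m_i+2}, m_{m_i+2}) = ⋯ = (w_{m_i+k}, m_{m_i+k}) are all equal. For 0 ≤ j ≤ k let G_j be G together with the added edges {i, b} for m_i + 1 ≤ b ≤ m_i + j. Then for every n ∈ ℕ the sequence (X_{G_j}^{(n)})_{j=0}^{k} is an arithmetic progression in ℚ[x_1,…,x_n]; in particular, if G_0 and G_k are e-positive then so is every G_j for 0 ≤ j ≤ k. -/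
import Mathlib


open scoped Classical
noncomputable section

/-- Words of length `d` in the positive integers. -/
abbrev NCWord (d : ℕ) := Fin d → ℕ+

/-- `M_d`: coefficient functions of homogeneous degree-`d` series in
noncommuting variables. -/
abbrev Md (d : ℕ) := NCWord d → ℚ

/-- `Y_G`, the chromatic symmetric function of a labelled graph in
noncommuting variables, as an element of `M_d`. -/
def YG {d : ℕ} (G : SimpleGraph (Fin d)) : Md d :=
  fun w => if ∀ j k : Fin d, G.Adj j k → w j ≠ w k then 1 else 0

/-- Set partitions of `{0, …, d-1}`. -/
abbrev SetPtn (d : ℕ) := Finpartition (Finset.univ : Finset (Fin d))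

/-- `j` and `k` lie in a common block of `π`. -/
def sameBlock {d : ℕ} (π : SetPtn d) (j k : Fin d) : Prop :=
  ∃ B ∈ π.parts, j ∈ B ∧ k ∈ B

/-- The elementary symmetric function `e_π` in noncommuting variables. -/
def eSP {d : ℕ} (π : SetPtn d) : Md d :=
  fun w => if ∀ j k : Fin d, j ≠ k → sameBlock π j k → w j ≠ w k then 1 else 0

/-- The block of `π` containing `a`. -/
def blockOf {d : ℕ} (π : SetPtn d) (a : Fin d) : Finset (Fin d) :=
  Finset.univ.filter fun k => sameBlock π a k

/-- The type of a set partition relative to the distinguished element `a`: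
the multiset of sizes of the blocks not containing `a` (an integer partition),
together with the size of the block containing `a`. -/
def ptype {d : ℕ} (π : SetPtn d) (a : Fin d) : Multiset ℕ × ℕ :=
  ((π.parts.erase (blockOf π a)).val.map Finset.card, (blockOf π a).card)

/-- `K_d`: the span of the differences `e_{π₁} - e_{π₂}` over pairs of set
partitions of equal type (relative to the distinguished element `a`). -/
def Ksub {d : ℕ} (a : Fin d) : Submodule ℚ (Md d) :=
  Submodule.span ℚ
    {f | ∃ π₁ π₂ : SetPtn d, ptype π₁ a = ptype π₂ a ∧ f = eSP π₁ - eSP π₂}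

/-- `(e)`-positivity of a labelled graph, with distinguished vertex `a`:
`Y_G` is congruent modulo `K_d` to a nonnegative combination of `e_π`'s. -/
def IsEPosNCAt {d : ℕ} (G : SimpleGraph (Fin d)) (a : Fin d) : Prop :=
  ∃ (s : Finset (SetPtn d)) (c : SetPtn d → ℚ),
    (∀ π, 0 ≤ c π) ∧ YG G - ∑ π ∈ s, c π • eSP π ∈ Ksub a

/-- Induction `↑ : M_d → M_{d+1}`. -/
def induct {d : ℕ} (f : Md d) : Md (d + 1) :=
  fun w => if w (Fin.last d) = w ⟨d - 1, by omega⟩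
    then f (fun t => w t.castSucc) else 0

/-- Concatenation of labelled graphs: identify the last vertex of `G` with
the first vertex of `H`. -/
def concatG {p q : ℕ} (G : SimpleGraph (Fin p)) (H : SimpleGraph (Fin q)) :
    SimpleGraph (Fin (p + q - 1)) :=
  SimpleGraph.fromRel fun a b =>
    (∃ i j : Fin p, G.Adj i j ∧ (a : ℕ) = (i : ℕ) ∧ (b : ℕ) = (j : ℕ)) ∨
    (∃ i j : Fin q, H.Adj i j ∧ (a : ℕ) = (i : ℕ) + (p - 1) ∧ (b : ℕ) = (j : ℕ) + (p - 1))

/-- The reverse graph `G^r`. -/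
def revG {d : ℕ} (G : SimpleGraph (Fin d)) : SimpleGraph (Fin d) :=
  SimpleGraph.comap (fun i : Fin d => (⟨d - 1 - (i : ℕ), by have := i.isLt; omega⟩ : Fin d)) G

/-- A labelled graph: a simple graph on vertex set `{0, …, n-1}`, `n ≥ 1`. -/
structure LGraph where
  n : ℕ
  npos : 0 < n
  G : SimpleGraph (Fin n)

/-- The last vertex of a labelled graph. -/
def LGraph.last (A : LGraph) : Fin A.n := ⟨A.n - 1, by have := A.npos; omega⟩

/-- A labelled graph is `(e)`-positive (at its last vertex). -/
def LGraph.EPosNC (A : LGraph) : Prop := IsEPosNCAt A.G A.last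

/-- Concatenation, as an operation on labelled graphs. -/
def LGraph.concat (A B : LGraph) : LGraph :=
  ⟨A.n + B.n - 1, by have := A.npos; have := B.npos; omega, concatG A.G B.G⟩

/-- Reversal, as an operation on labelled graphs. -/
def LGraph.rev (A : LGraph) : LGraph := ⟨A.n, A.npos, revG A.G⟩

/-- Appendable `(e)`-positivity: `G + H` is `(e)`-positive for every
`(e)`-positive labelled graph `G`. -/
def LGraph.Appendable (H : LGraph) : Prop :=
  ∀ A : LGraph, A.EPosNC → (A.concat H).EPosNC

/-- The chromatic symmetric polynomial of `G` in `n` commuting variables. -/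
def cspoly {V : Type} [Fintype V] [DecidableEq V] (G : SimpleGraph V) (n : ℕ) :
    MvPolynomial (Fin n) ℚ :=
  ∑ κ ∈ Finset.univ.filter (fun κ : V → Fin n => ∀ u v : V, G.Adj u v → κ u ≠ κ v),
    ∏ v : V, MvPolynomial.X (κ v)

/-- `e`-positivity of a finite graph. -/
def EPos {V : Type} [Fintype V] [DecidableEq V] (G : SimpleGraph V) : Prop :=
  ∃ c : Nat.Partition (Fintype.card V) → ℚ, (∀ p, 0 ≤ c p) ∧
    ∀ n : ℕ, cspoly G n =
      ∑ p : Nat.Partition (Fintype.card V),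
        c p • (p.parts.map fun r => MvPolynomial.esymm (Fin n) ℚ r).prod

/-- Closed neighbourhood of a vertex, as a finset. -/
def closedNbhd {d : ℕ} (G : SimpleGraph (Fin d)) (i : Fin d) : Finset (Fin d) :=
  Finset.univ.filter fun k => k = i ∨ G.Adj i k

/-- `m_i`: the largest label in the closed neighbourhood of `i`. -/
def mIdx {d : ℕ} (G : SimpleGraph (Fin d)) (i : Fin d) : Fin d :=
  (closedNbhd G i).max' ⟨i, by simp [closedNbhd]⟩

/-- `w_i`: the smallest label in the closed neighbourhood of `i`. -/
def wIdx {d : ℕ} (G : SimpleGraph (Fin d)) (i : Fin d) : Fin d :=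
  (closedNbhd G i).min' ⟨i, by simp [closedNbhd]⟩

/-- Labelled unit interval graph. -/
def IsUnitInterval {d : ℕ} (G : SimpleGraph (Fin d)) : Prop :=
  ∀ i v w j : Fin d, i ≤ v → v < w → w ≤ j → G.Adj i j → G.Adj v w

/-- An acyclic orientation of a graph, as an asymmetric relation with
irreflexive transitive closure whose symmetrization matches adjacency. -/
def IsAcyclicOrientation {V : Type} (G : SimpleGraph V) (r : V → V → Prop) : Prop :=
  (∀ a b, r a b → ¬ r b a) ∧
  (∀ a b, a ≠ b → ((r a b ∨ r b a) ↔ G.Adj a b)) ∧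
  Irreflexive (Relation.TransGen r)

/-- The set of sinks of an orientation. -/
def sinkSet {V : Type} [Fintype V] (r : V → V → Prop) : Finset V :=
  Finset.univ.filter fun x => ∀ y, ¬ r x y

/-- The labelled path `P_d`. -/
def PathG (d : ℕ) : SimpleGraph (Fin d) :=
  SimpleGraph.fromRel fun a b => (b : ℕ) = (a : ℕ) + 1

/-- The labelled cycle `C_d`. -/
def CycleG (d : ℕ) : SimpleGraph (Fin d) :=
  SimpleGraph.fromRel fun a b => (b : ℕ) = (a : ℕ) + 1 ∨ ((a : ℕ) = 0 ∧ (b : ℕ) = d - 1)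

/-- The graph obtained from `G` by adding the edges `{i, b}` for
`M + 1 ≤ b ≤ M + j` (0-indexed labels). -/
def addFanEdges {D : ℕ} (G : SimpleGraph (Fin D)) (i : Fin D) (M j : ℕ) :
    SimpleGraph (Fin D) :=
  SimpleGraph.fromRel fun a b =>
    G.Adj a b ∨ (a = i ∧ M + 1 ≤ (b : ℕ) ∧ (b : ℕ) ≤ M + j)

section AuxStmt1

lemma mem_closedNbhd_self {d : ℕ} (G : SimpleGraph (Fin d)) (v : Fin d) :
    v ∈ closedNbhd G v := by simp [closedNbhd]

lemma wIdx_le_self {d : ℕ} (G : SimpleGraph (Fin d)) (v : Fin d) : wIdx G v ≤ v :=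
  Finset.min'_le _ _ (mem_closedNbhd_self G v)

lemma self_le_mIdx {d : ℕ} (G : SimpleGraph (Fin d)) (v : Fin d) : v ≤ mIdx G v :=
  Finset.le_max' _ _ (mem_closedNbhd_self G v)

lemma adj_iff_interval {d : ℕ} (G : SimpleGraph (Fin d)) (hG : IsUnitInterval G)
    (v u : Fin d) :
    G.Adj v u ↔ u ≠ v ∧ wIdx G v ≤ u ∧ u ≤ mIdx G v := by
  constructor
  · intro h
    have hu : u ∈ closedNbhd G v := by simp [closedNbhd, h]
    exact ⟨fun e => G.irrefl (e ▸ h), Finset.min'_le _ _ hu, Finset.le_max' _ _ hu⟩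
  · rintro ⟨hne, h1, h2⟩
    rcases lt_or_gt_of_ne hne with hlt | hgt
    · have hwmem : wIdx G v ∈ closedNbhd G v := Finset.min'_mem _ _
      simp only [closedNbhd, Finset.mem_filter] at hwmem
      have hwv : wIdx G v < v := lt_of_le_of_lt h1 hlt
      have hadj : G.Adj v (wIdx G v) := by
        rcases hwmem.2 with h | h
        · exact absurd h hwv.ne
        · exact h
      exact (hG (wIdx G v) u v v h1 hlt le_rfl hadj.symm).symm
    · have hmmem : mIdx G v ∈ closedNbhd G v := Finset.max'_mem _ _
      simp only [closedNbhd, Finset.mem_filter] at hmmem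
      have hadj : G.Adj v (mIdx G v) := by
        rcases hmmem.2 with h | h
        · exact absurd h (lt_of_lt_of_le hgt h2).ne'
        · exact h
      exact hG v v u (mIdx G v) le_rfl hgt h2 hadj

lemma sum_filter_iff_congr {α β : Type*} [AddCommMonoid β] {s : Finset α} {p q : α → Prop}
    [DecidablePred p] [DecidablePred q] (h : ∀ x, p x ↔ q x) (f : α → β) :
    ∑ x ∈ s.filter p, f x = ∑ x ∈ s.filter q, f x := by
  apply Finset.sum_congr _ (fun _ _ => rfl)
  ext x
  simp only [Finset.mem_filter, h x]

lemma key_diff {D : ℕ} {G : SimpleGraph (Fin D)} (hG : IsUnitInterval G)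
    {i : Fin D} {M k : ℕ} (hiM : (i : ℕ) ≤ M) (hkD : M + k < D)
    {W Mx : Fin D}
    (hw : ∀ (t : ℕ), 1 ≤ t → t ≤ k → ∀ (h : M + t < D),
      wIdx G ⟨M + t, h⟩ = W ∧ mIdx G ⟨M + t, h⟩ = Mx)
    (n j : ℕ) (hj : j + 1 ≤ k) :
    cspoly (addFanEdges G i M (j + 1)) n - cspoly (addFanEdges G i M j) n =
      cspoly (addFanEdges G i M 1) n - cspoly (addFanEdges G i M 0) n := by
  classical
  have hbD : ∀ t, t ≤ k → M + t < D := fun t ht => by omega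
  set b : ℕ → Fin D := fun t => if h : M + t < D then ⟨M + t, h⟩ else ⟨0, by omega⟩ with hbdef
  have hbv : ∀ t, t ≤ k → (b t : ℕ) = M + t := by
    intro t ht
    simp [hbdef, dif_pos (hbD t ht)]
  -- characterization of properness for the fan graphs
  have hproper : ∀ (m : ℕ), m ≤ k → ∀ κ : Fin D → Fin n,
      (∀ u v, (addFanEdges G i M m).Adj u v → κ u ≠ κ v) ↔
      ((∀ u v, G.Adj u v → κ u ≠ κ v) ∧ ∀ t, 1 ≤ t → t ≤ m → κ i ≠ κ (b t)) := by
    intro m hm κ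
    constructor
    · intro h
      refine ⟨fun u v huv => h u v ?_, fun t ht1 htm => h i (b t) ?_⟩
      · exact (SimpleGraph.fromRel_adj _ _ _).mpr ⟨huv.ne, Or.inl (Or.inl huv)⟩
      · have hbt : (b t : ℕ) = M + t := hbv t (le_trans htm hm)
        refine (SimpleGraph.fromRel_adj _ _ _).mpr ⟨?_, Or.inl (Or.inr ⟨rfl, ?_, ?_⟩)⟩
        · intro e
          have : (i : ℕ) = (b t : ℕ) := congrArg Fin.val e
          omega
        · omega
        · omega
    · rintro ⟨h1, h2⟩ u v huv
      rw [addFanEdges, SimpleGraph.fromRel_adj] at huv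
      obtain ⟨hne, h⟩ := huv
      rcases h with (h | ⟨hu, hv1, hv2⟩) | (h | ⟨hv, hu1, hu2⟩)
      · exact h1 u v h
      · subst hu
        have hveq : v = b ((v : ℕ) - M) := by
          have := hbv ((v : ℕ) - M) (by omega)
          exact Fin.ext (by omega)
        rw [hveq]
        exact h2 _ (by omega) (by omega)
      · exact fun e => h1 v u h e.symm
      · subst hv
        have hueq : u = b ((u : ℕ) - M) := by
          have := hbv ((u : ℕ) - M) (by omega)
          exact Fin.ext (by omega)
        intro e
        exact h2 ((u : ℕ) - M) (by omega) (by omega) (hueq ▸ e.symm)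
  -- splitting the chromatic polynomial
  have hsplit : ∀ (m : ℕ), m + 1 ≤ k →
      cspoly (addFanEdges G i M m) n =
        (∑ κ ∈ Finset.univ.filter (fun κ : Fin D → Fin n =>
          ((∀ u v, G.Adj u v → κ u ≠ κ v) ∧ ∀ t, 1 ≤ t → t ≤ m → κ i ≠ κ (b t)) ∧
            κ i = κ (b (m + 1))),
          ∏ v, MvPolynomial.X (κ v)) + cspoly (addFanEdges G i M (m + 1)) n := by
    intro m hm
    have hiff2 : ∀ κ : Fin D → Fin n,
        ((∀ u v, G.Adj u v → κ u ≠ κ v) ∧ ∀ t, 1 ≤ t → t ≤ m + 1 → κ i ≠ κ (b t)) ↔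
        (((∀ u v, G.Adj u v → κ u ≠ κ v) ∧ ∀ t, 1 ≤ t → t ≤ m → κ i ≠ κ (b t)) ∧
          ¬ κ i = κ (b (m + 1))) := by
      intro κ
      constructor
      · rintro ⟨hPg, hfan⟩
        exact ⟨⟨hPg, fun t ht1 htm => hfan t ht1 (by omega)⟩, hfan (m + 1) (by omega) le_rfl⟩
      · rintro ⟨⟨hPg, hfan⟩, hne⟩
        refine ⟨hPg, fun t ht1 htm1 => ?_⟩
        rcases Nat.lt_or_ge t (m + 1) with h | h
        · exact hfan t ht1 (by omega)
        · have : t = m + 1 := by omega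
          subst this
          exact hne
    rw [cspoly, cspoly, Finset.sum_filter, Finset.sum_filter, Finset.sum_filter,
      ← Finset.sum_add_distrib]
    refine Finset.sum_congr rfl fun κ _ => ?_
    simp only [hproper m (by omega) κ, hproper (m + 1) hm κ, hiff2 κ]
    by_cases hA : ((∀ u v, G.Adj u v → κ u ≠ κ v) ∧ ∀ t, 1 ≤ t → t ≤ m → κ i ≠ κ (b t)) <;>
      by_cases hE : κ i = κ (b (m + 1)) <;>
      simp [hA, hE]
  -- the correction terms agree
  have hT : (∑ κ ∈ Finset.univ.filter (fun κ : Fin D → Fin n =>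
          ((∀ u v, G.Adj u v → κ u ≠ κ v) ∧ ∀ t, 1 ≤ t → t ≤ j → κ i ≠ κ (b t)) ∧
            κ i = κ (b (j + 1))),
          (∏ v, MvPolynomial.X (κ v) : MvPolynomial (Fin n) ℚ))
      = ∑ κ ∈ Finset.univ.filter (fun κ : Fin D → Fin n =>
          ((∀ u v, G.Adj u v → κ u ≠ κ v) ∧ ∀ t, 1 ≤ t → t ≤ 0 → κ i ≠ κ (b t)) ∧
            κ i = κ (b (0 + 1))),
          ∏ v, MvPolynomial.X (κ v) := by
    by_cases hj1 : 1 ≤ j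
    case neg =>
      have : j = 0 := by omega
      subst this
      rfl
    case pos =>
    have hb1k : (1 : ℕ) ≤ k := by omega
    have hbv1 : (b 1 : ℕ) = M + 1 := hbv 1 hb1k
    have hbv2 : (b (j + 1) : ℕ) = M + (j + 1) := hbv (j + 1) hj
    have hne12 : b 1 ≠ b (j + 1) := by
      intro e
      have := congrArg Fin.val e
      omega
    have hibt : ∀ t, 1 ≤ t → t ≤ k → i ≠ b t := by
      intro t h1 h2 e
      have := congrArg Fin.val e
      rw [hbv t h2] at this
      omega
    have hWM : ∀ t, 1 ≤ t → t ≤ k → wIdx G (b t) = W ∧ mIdx G (b t) = Mx := by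
      intro t h1 h2
      have hD' := hbD t h2
      have hbt : b t = ⟨M + t, hD'⟩ := Fin.ext (hbv t h2)
      rw [hbt]
      exact hw t h1 h2 hD'
    have hadjb : ∀ t s, 1 ≤ t → t ≤ k → 1 ≤ s → s ≤ k → t ≠ s → G.Adj (b t) (b s) := by
      intro t s ht1 htk hs1 hsk hts
      rw [adj_iff_interval G hG]
      refine ⟨?_, ?_, ?_⟩
      · intro e
        have := congrArg Fin.val e
        rw [hbv s hsk, hbv t htk] at this
        omega
      · rw [(hWM t ht1 htk).1, ← (hWM s hs1 hsk).1]
        exact wIdx_le_self G (b s)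
      · rw [(hWM t ht1 htk).2, ← (hWM s hs1 hsk).2]
        exact self_le_mIdx G (b s)
    have htwin : ∀ x, x ≠ b 1 → x ≠ b (j + 1) →
        (G.Adj (b 1) x ↔ G.Adj (b (j + 1)) x) := by
      intro x hx1 hx2
      rw [adj_iff_interval G hG, adj_iff_interval G hG,
        (hWM 1 le_rfl hb1k).1, (hWM 1 le_rfl hb1k).2,
        (hWM (j + 1) (by omega) hj).1, (hWM (j + 1) (by omega) hj).2]
      simp [hx1, hx2]
    set σ := Equiv.swap (b 1) (b (j + 1)) with hσdef
    have hσi : σ i = i :=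
      Equiv.swap_apply_of_ne_of_ne (hibt 1 le_rfl hb1k) (hibt (j + 1) (by omega) hj)
    have hauto : ∀ x y, G.Adj x y → G.Adj (σ x) (σ y) := by
      intro x y h
      by_cases hx1 : x = b 1
      · subst hx1
        by_cases hy2 : y = b (j + 1)
        · subst hy2
          simpa [hσdef, Equiv.swap_apply_left, Equiv.swap_apply_right] using
            hadjb (j + 1) 1 (by omega) hj le_rfl hb1k (by omega)
        · have hy1 : y ≠ b 1 := fun e => G.irrefl (e ▸ h)
          rw [show σ (b 1) = b (j + 1) from Equiv.swap_apply_left _ _,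
            show σ y = y from Equiv.swap_apply_of_ne_of_ne hy1 hy2]
          exact (htwin y hy1 hy2).mp h
      · by_cases hx2 : x = b (j + 1)
        · subst hx2
          by_cases hy1 : y = b 1
          · subst hy1
            simpa [hσdef, Equiv.swap_apply_left, Equiv.swap_apply_right] using
              hadjb 1 (j + 1) le_rfl hb1k (by omega) hj (by omega)
          · have hy2 : y ≠ b (j + 1) := fun e => G.irrefl (e ▸ h)
            rw [show σ (b (j + 1)) = b 1 from Equiv.swap_apply_right _ _,
              show σ y = y from Equiv.swap_apply_of_ne_of_ne hy1 hy2]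
            exact (htwin y hy1 hy2).mpr h
        · rw [show σ x = x from Equiv.swap_apply_of_ne_of_ne hx1 hx2]
          by_cases hy1 : y = b 1
          · subst hy1
            rw [show σ (b 1) = b (j + 1) from Equiv.swap_apply_left _ _]
            exact ((htwin x hx1 hx2).mp h.symm).symm
          · by_cases hy2 : y = b (j + 1)
            · subst hy2
              rw [show σ (b (j + 1)) = b 1 from Equiv.swap_apply_right _ _]
              exact ((htwin x hx1 hx2).mpr h.symm).symm
            · rw [show σ y = y from Equiv.swap_apply_of_ne_of_ne hy1 hy2]
              exact h
    apply Finset.sum_nbij' (i := fun κ => κ ∘ σ) (j := fun κ => κ ∘ σ)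
    · intro κ hκ
      simp only [Finset.mem_filter, Finset.mem_univ, true_and] at hκ ⊢
      obtain ⟨⟨hPg, _⟩, heq⟩ := hκ
      refine ⟨⟨fun u v huv e => hPg (σ u) (σ v) (hauto u v huv) e,
        fun t ht1 ht0 => absurd (ht1.trans ht0) (by omega)⟩, ?_⟩
      show κ (σ i) = κ (σ (b (0 + 1)))
      rw [hσi, show σ (b (0 + 1)) = b (j + 1) from Equiv.swap_apply_left _ _]
      exact heq
    · intro κ hκ
      simp only [Finset.mem_filter, Finset.mem_univ, true_and] at hκ ⊢
      obtain ⟨⟨hPg, _⟩, heq⟩ := hκ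
      have heq1 : κ i = κ (b 1) := heq
      refine ⟨⟨fun u v huv e => hPg (σ u) (σ v) (hauto u v huv) e, ?_⟩, ?_⟩
      · intro t ht1 htj
        show κ (σ i) ≠ κ (σ (b t))
        rw [hσi]
        by_cases ht : t = 1
        · subst ht
          rw [show σ (b 1) = b (j + 1) from Equiv.swap_apply_left _ _, heq1]
          exact hPg (b 1) (b (j + 1)) (hadjb 1 (j + 1) le_rfl hb1k (by omega) hj (by omega))
        · have hbt1 : b t ≠ b 1 := by
            intro e
            have := congrArg Fin.val e
            rw [hbv t (by omega), hbv 1 hb1k] at this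
            omega
          have hbt2 : b t ≠ b (j + 1) := by
            intro e
            have := congrArg Fin.val e
            rw [hbv t (by omega), hbv (j + 1) hj] at this
            omega
          rw [show σ (b t) = b t from Equiv.swap_apply_of_ne_of_ne hbt1 hbt2, heq1]
          exact hPg (b 1) (b t) (hadjb 1 t le_rfl hb1k (by omega) (by omega) (by omega))
      · show κ (σ i) = κ (σ (b (j + 1)))
        rw [hσi, show σ (b (j + 1)) = b 1 from Equiv.swap_apply_right _ _]
        exact heq1
    · intro κ _
      funext v
      simp [hσdef, Equiv.swap_apply_self]
    · intro κ _
      funext v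
      simp [hσdef, Equiv.swap_apply_self]
    · intro κ _
      exact (Equiv.prod_comp σ fun v => MvPolynomial.X (κ v)).symm
  have h1 := hsplit j hj
  have h2 := hsplit 0 (by omega)
  simp only [zero_add] at h2
  rw [h1, h2, hT]
  simp only [zero_add]
  ring

end AuxStmt1

theorem stmt1 (D : ℕ) (hD : 0 < D) (G : SimpleGraph (Fin D))
    (hG : IsUnitInterval G)
    (i : Fin D) (hi : (i : ℕ) + 1 < D)
    (hm : (mIdx G i : ℕ) + 1 ≤ (mIdx G ⟨(i : ℕ) + 1, hi⟩ : ℕ))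
    (k : ℕ) (hk1 : 1 ≤ k) (hkD : (mIdx G i : ℕ) + k < D)
    (hpairs : ∀ (t : ℕ) (ht1 : 1 ≤ t) (htk : t ≤ k),
      wIdx G ⟨(mIdx G i : ℕ) + t, by omega⟩ = wIdx G ⟨(mIdx G i : ℕ) + 1, by omega⟩ ∧
      mIdx G ⟨(mIdx G i : ℕ) + t, by omega⟩ = mIdx G ⟨(mIdx G i : ℕ) + 1, by omega⟩) :
    (∀ n j : ℕ, j + 1 ≤ k →
      cspoly (addFanEdges G i (mIdx G i : ℕ) (j + 1)) n -
          cspoly (addFanEdges G i (mIdx G i : ℕ) j) n =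
        cspoly (addFanEdges G i (mIdx G i : ℕ) 1) n -
          cspoly (addFanEdges G i (mIdx G i : ℕ) 0) n) ∧
    (EPos (addFanEdges G i (mIdx G i : ℕ) 0) → EPos (addFanEdges G i (mIdx G i : ℕ) k) →
      ∀ j ≤ k, EPos (addFanEdges G i (mIdx G i : ℕ) j)) := by
  classical
  have hiM : (i : ℕ) ≤ (mIdx G i : ℕ) := self_le_mIdx G i
  have hM1D : (mIdx G i : ℕ) + 1 < D := by omega
  have hw : ∀ (t : ℕ), 1 ≤ t → t ≤ k → ∀ (h : (mIdx G i : ℕ) + t < D),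
      wIdx G ⟨(mIdx G i : ℕ) + t, h⟩ = wIdx G ⟨(mIdx G i : ℕ) + 1, hM1D⟩ ∧
      mIdx G ⟨(mIdx G i : ℕ) + t, h⟩ = mIdx G ⟨(mIdx G i : ℕ) + 1, hM1D⟩ :=
    fun t ht1 htk _ => hpairs t ht1 htk
  have part1 : ∀ n j : ℕ, j + 1 ≤ k →
      cspoly (addFanEdges G i (mIdx G i : ℕ) (j + 1)) n -
          cspoly (addFanEdges G i (mIdx G i : ℕ) j) n =
        cspoly (addFanEdges G i (mIdx G i : ℕ) 1) n -
          cspoly (addFanEdges G i (mIdx G i : ℕ) 0) n :=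
    fun n j hj => key_diff hG hiM hkD hw n j hj
  refine ⟨part1, ?_⟩
  rintro ⟨c0, hc0, he0⟩ ⟨ck, hck, hek⟩ j hjk
  -- arithmetic progression
  have hAP : ∀ (n : ℕ) (j' : ℕ), j' ≤ k →
      cspoly (addFanEdges G i (mIdx G i : ℕ) j') n =
        cspoly (addFanEdges G i (mIdx G i : ℕ) 0) n +
          j' • (cspoly (addFanEdges G i (mIdx G i : ℕ) 1) n -
            cspoly (addFanEdges G i (mIdx G i : ℕ) 0) n) := by
    intro n j'
    induction j' with
    | zero => intro _; simp
    | succ m ih =>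
      intro hm
      have h1 := part1 n m (by omega)
      have h2 := ih (by omega)
      have h3 : cspoly (addFanEdges G i (mIdx G i : ℕ) (m + 1)) n =
          cspoly (addFanEdges G i (mIdx G i : ℕ) m) n +
            (cspoly (addFanEdges G i (mIdx G i : ℕ) 1) n -
              cspoly (addFanEdges G i (mIdx G i : ℕ) 0) n) := by
        rw [← h1]; ring
      rw [h3, h2, succ_nsmul]
      abel
  have hk0 : ((k : ℚ)) ≠ 0 := by
    exact_mod_cast (by omega : k ≠ 0)
  set a : ℚ := 1 - (j : ℚ) / (k : ℚ) with hadef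
  set bq : ℚ := (j : ℚ) / (k : ℚ) with hbqdef
  have hbq0 : 0 ≤ bq := by
    apply div_nonneg <;> positivity
  have hbq1 : bq ≤ 1 := by
    rw [hbqdef, div_le_one (by positivity)]
    exact_mod_cast hjk
  have ha0 : 0 ≤ a := by rw [hadef]; linarith
  have hcomb : ∀ n : ℕ, cspoly (addFanEdges G i (mIdx G i : ℕ) j) n =
      a • cspoly (addFanEdges G i (mIdx G i : ℕ) 0) n +
        bq • cspoly (addFanEdges G i (mIdx G i : ℕ) k) n := by
    intro n
    rw [hAP n j hjk, hAP n k le_rfl]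
    rw [← Nat.cast_smul_eq_nsmul ℚ j, ← Nat.cast_smul_eq_nsmul ℚ k]
    rw [smul_add, smul_smul]
    have hbk : bq * (k : ℚ) = (j : ℚ) := div_mul_cancel₀ _ hk0
    rw [hbk, ← add_assoc, ← add_smul]
    have hab : a + bq = 1 := by rw [hadef]; ring
    rw [hab, one_smul]
  refine ⟨fun p => a * c0 p + bq * ck p,
    fun p => add_nonneg (mul_nonneg ha0 (hc0 p)) (mul_nonneg hbq0 (hck p)), ?_⟩
  intro n
  rw [hcomb n, he0 n, hek n, Finset.smul_sum, Finset.smul_sum, ← Finset.sum_add_distrib]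
  refine Finset.sum_congr rfl fun p _ => ?_
  rw [add_smul, mul_smul, mul_smul]
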